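/- arXiv:1703.09732 — 2 statements merged into one kernel-verified Lean document; each statement's English description precedes it below -/
import Mathlib

section
/- Let s >= 2, t >= s, and suppose n = s-1+k*t for a positive integer k. Then the largest adjacency eigenvalue of the join of K_{s-1} with k disjoint copies of K_t equals (s+t-3 + sqrt((s+t-3)^2 + 4((s-1)(n-s+1) - (s-2)(t-1))))/2. -/
open SimpleGraph Finset

attribute [local instance] Classical.propDecidable

/-- The largest eigenvalue of a real matrix, as the supremum of its eigenvalues. -/
noncomputable def lam1 {V : Type*} [Fintype V] (A : Matrix V V ℝ) : ℝ :=
  sSup {t : ℝ | ∃ x : V → ℝ, x ≠ 0 ∧ A.mulVec x = t • x}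

/-- The join of two simple graphs: all edges of both graphs plus all edges between them. -/
def SimpleGraph.join {α β : Type*} (G : SimpleGraph α) (H : SimpleGraph β) :
    SimpleGraph (α ⊕ β) where
  Adj x y :=
    match x, y with
    | Sum.inl a, Sum.inl b => G.Adj a b
    | Sum.inr a, Sum.inr b => H.Adj a b
    | Sum.inl _, Sum.inr _ => True
    | Sum.inr _, Sum.inl _ => True
  symm := by refine ⟨?_⟩; rintro (a | a) (b | b) h
             · exact G.adj_symm h
             · trivial
             · trivial
             · exact H.adj_symm h
  loopless := by refine ⟨?_⟩; rintro (a | a) h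
                 · exact G.irrefl h
                 · exact H.irrefl h

/-- The disjoint union of `k` copies of the complete graph `K_t`. -/
def cliqueUnion (k t : ℕ) : SimpleGraph (Fin k × Fin t) where
  Adj p q := p.1 = q.1 ∧ p ≠ q
  symm := by refine ⟨?_⟩; rintro p q ⟨h1, h2⟩; exact ⟨h1.symm, h2.symm⟩
  loopless := by refine ⟨?_⟩; rintro p ⟨h1, h2⟩; exact h2 rfl
open Finset in
lemma sum_ite_ne_const {m : ℕ} (i : Fin m) (c : ℝ) :
    ∑ j : Fin m, (if i ≠ j then c else 0) = m * c - c := by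
  have h : ∀ j : Fin m, (if i ≠ j then c else 0) = c - (if j = i then c else 0) := by
    intro j
    rcases eq_or_ne j i with h | h
    · subst h; simp
    · rw [if_pos (Ne.symm h), if_neg h, sub_zero]
  simp_rw [h, Finset.sum_sub_distrib, Finset.sum_const,
    Finset.sum_ite_eq' Finset.univ i (fun _ => c)]
  simp [mul_comm]

open Finset in
lemma sum_ite_clique (k t : ℕ) (p0 : Fin k × Fin t) (c : ℝ) :
    ∑ p : Fin k × Fin t, (if (cliqueUnion k t).Adj p0 p then c else 0) = t * c - c := by
  obtain ⟨j, m⟩ := p0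
  rw [Fintype.sum_prod_type]
  have inner : ∀ j' : Fin k,
      (∑ m' : Fin t, if (cliqueUnion k t).Adj (j, m) (j', m') then c else 0)
        = if j' = j then (t * c - c) else 0 := by
    intro j'
    rcases eq_or_ne j' j with h | h
    · rw [if_pos h]; subst h
      have h2 : ∀ m' : Fin t,
          (if (cliqueUnion k t).Adj (j', m) (j', m') then c else 0)
            = (if m ≠ m' then c else 0) := by
        intro m'; by_cases hm : m = m' <;> simp [hm, cliqueUnion]
      rw [Finset.sum_congr rfl (fun m' _ => h2 m'), sum_ite_ne_const m c]
    · rw [if_neg h]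
      have h2 : ∀ m' : Fin t,
          (if (cliqueUnion k t).Adj (j, m) (j', m') then c else 0) = 0 := by
        intro m'
        rw [if_neg]
        intro hadj
        exact h ((hadj.1 : j = j').symm)
      rw [Finset.sum_congr rfl (fun m' _ => h2 m'), Finset.sum_const, smul_zero]
  rw [Finset.sum_congr rfl (fun j' _ => inner j'),
    Finset.sum_ite_eq' Finset.univ j (fun _ => t * c - c), if_pos (Finset.mem_univ j)]
open Finset in
lemma mulVec_inl (s1 k t : ℕ) (x : (Fin s1 ⊕ Fin k × Fin t) → ℝ) (i : Fin s1) :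
    (((completeGraph (Fin s1)).join (cliqueUnion k t)).adjMatrix ℝ).mulVec x (Sum.inl i)
      = (∑ j : Fin s1, if i ≠ j then x (Sum.inl j) else 0) + ∑ p : Fin k × Fin t, x (Sum.inr p) := by
  simp [Matrix.mulVec, dotProduct, SimpleGraph.adjMatrix_apply, Fintype.sum_sum_type,
    ite_mul, one_mul, zero_mul, SimpleGraph.join, completeGraph]
  exact Finset.sum_congr rfl fun j _ => by rcases eq_or_ne i j with h | h <;> simp [h]

open Finset in
lemma mulVec_inr (s1 k t : ℕ) (x : (Fin s1 ⊕ Fin k × Fin t) → ℝ) (p0 : Fin k × Fin t) :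
    (((completeGraph (Fin s1)).join (cliqueUnion k t)).adjMatrix ℝ).mulVec x (Sum.inr p0)
      = (∑ j : Fin s1, x (Sum.inl j))
        + ∑ p : Fin k × Fin t, (if (cliqueUnion k t).Adj p0 p then x (Sum.inr p) else 0) := by
  simp [Matrix.mulVec, dotProduct, SimpleGraph.adjMatrix_apply, Fintype.sum_sum_type,
    ite_mul, one_mul, zero_mul, SimpleGraph.join, completeGraph]
set_option maxHeartbeats 2000000 in
theorem stmt8 (s t k n : ℕ) (hs : 2 ≤ s) (hst : s ≤ t) (hk : 1 ≤ k)
    (hn : n = s - 1 + k * t) :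
    lam1 (((completeGraph (Fin (s - 1))).join (cliqueUnion k t)).adjMatrix ℝ) =
      ((s : ℝ) + (t : ℝ) - 3 + Real.sqrt (((s : ℝ) + (t : ℝ) - 3) ^ 2 +
        4 * (((s : ℝ) - 1) * ((n : ℝ) - (s : ℝ) + 1) - ((s : ℝ) - 2) * ((t : ℝ) - 1)))) / 2 := by
  have hs1 : 1 ≤ s := le_trans (by norm_num) hs
  have hS : (2:ℝ) ≤ (s:ℝ) := by exact_mod_cast hs
  have hT : (s:ℝ) ≤ (t:ℝ) := by exact_mod_cast hst
  have hK : (1:ℝ) ≤ (k:ℝ) := by exact_mod_cast hk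
  have hT2 : (2:ℝ) ≤ (t:ℝ) := le_trans hS hT
  have hcard : ((s-1:ℕ):ℝ) = (s:ℝ) - 1 := by
    push_cast [Nat.cast_sub hs1]; ring
  obtain ⟨P, hPdef⟩ : ∃ P : ℝ, P = (s:ℝ) + (t:ℝ) - 3 := ⟨_, rfl⟩
  obtain ⟨C, hCdef⟩ : ∃ C : ℝ, C = ((s:ℝ)-1)*((k:ℝ)*(t:ℝ)) - ((s:ℝ)-2)*((t:ℝ)-1) := ⟨_, rfl⟩
  have hC : 0 ≤ C := by
    rw [hCdef]
    nlinarith [mul_nonneg (by linarith : (0:ℝ) ≤ (k:ℝ)-1)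
      (mul_nonneg (by linarith : (0:ℝ) ≤ (s:ℝ)-1) (by linarith : (0:ℝ) ≤ (t:ℝ)))]
  have hP1 : (1:ℝ) ≤ P := by rw [hPdef]; linarith
  have hD : 0 ≤ P^2 + 4*C := by nlinarith
  obtain ⟨R, hRdef⟩ : ∃ R : ℝ, R = Real.sqrt (P^2 + 4*C) := ⟨_, rfl⟩
  have hRsq : R^2 = P^2 + 4*C := by rw [hRdef]; exact Real.sq_sqrt hD
  have hR0 : 0 ≤ R := by rw [hRdef]; exact Real.sqrt_nonneg _
  have hRP : P ≤ R := by
    have h1 := Real.sqrt_le_sqrt (show P^2 ≤ P^2 + 4*C by linarith)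
    rw [Real.sqrt_sq (by linarith)] at h1
    rw [hRdef]; exact h1
  obtain ⟨L, hLdef⟩ : ∃ L : ℝ, L = (P + R)/2 := ⟨_, rfl⟩
  have hLP : P ≤ L := by rw [hLdef]; linarith
  have hLT : (t:ℝ) - 1 ≤ L := by
    have : (t:ℝ) - 1 ≤ P := by rw [hPdef]; linarith
    linarith
  have hLS : (s:ℝ) - 2 ≤ L := by
    have : (s:ℝ) - 2 ≤ P := by rw [hPdef]; linarith
    linarith
  have hLquad : L^2 - P*L - C = 0 := by
    rw [hLdef]; linear_combination hRsq / 4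
  have hLkey : (L - ((t:ℝ)-1)) * (L - ((s:ℝ)-2)) = ((s:ℝ)-1)*((k:ℝ)*(t:ℝ)) := by
    have h := hLquad
    rw [hPdef, hCdef] at h
    linear_combination h
  have hs1R : ((s:ℝ)-1) ≠ 0 := by linarith
  obtain ⟨a, hadef⟩ : ∃ a : ℝ, a = (L - ((t:ℝ)-1)) / ((s:ℝ)-1) := ⟨_, rfl⟩
  have haS : a * ((s:ℝ)-1) = L - ((t:ℝ)-1) := by
    rw [hadef]; field_simp
  have hakey : a * (L - ((s:ℝ)-2)) = (k:ℝ)*(t:ℝ) := by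
    have h2 : a * (L - ((s:ℝ)-2)) * ((s:ℝ)-1) = ((k:ℝ)*(t:ℝ)) * ((s:ℝ)-1) := by
      linear_combination (L - ((s:ℝ)-2)) * haS + hLkey
    exact mul_right_cancel₀ hs1R h2
  set Gr := ((completeGraph (Fin (s-1))).join (cliqueUnion k t)) with hGr
  set E := {μ : ℝ | ∃ x : (Fin (s-1) ⊕ Fin k × Fin t) → ℝ, x ≠ 0 ∧
      (Gr.adjMatrix ℝ).mulVec x = μ • x} with hE
  have hmem : L ∈ E := by
    refine ⟨Sum.elim (fun _ => a) (fun _ => 1), ?_, ?_⟩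
    · intro h
      have := congrFun h (Sum.inr (⟨0, by omega⟩, ⟨0, by omega⟩))
      simp at this
    · funext v
      rcases v with i | p
      · rw [hGr, mulVec_inl]
        simp only [Sum.elim_inl, Sum.elim_inr, Pi.smul_apply, smul_eq_mul]
        rw [sum_ite_ne_const i a, Finset.sum_const]
        simp only [Finset.card_univ, Fintype.card_prod, Fintype.card_fin, nsmul_eq_mul, mul_one]
        rw [hcard]
        push_cast
        linear_combination -hakey
      · rw [hGr, mulVec_inr]
        simp only [Sum.elim_inl, Sum.elim_inr, Pi.smul_apply, smul_eq_mul]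
        rw [sum_ite_clique k t p (1:ℝ), Finset.sum_const]
        simp only [Finset.card_univ, Fintype.card_fin, nsmul_eq_mul, mul_one]
        rw [hcard]
        linarith [haS]
  have hub : ∀ μ ∈ E, μ ≤ L := by
    rintro μ ⟨y, hy0, hyeq⟩
    obtain ⟨i0, -, hi0⟩ := Finset.exists_max_image (Finset.univ : Finset (Fin (s-1)))
      (fun i => |y (Sum.inl i)|) ⟨⟨0, by omega⟩, Finset.mem_univ _⟩
    obtain ⟨p0, -, hp0⟩ := Finset.exists_max_image (Finset.univ : Finset (Fin k × Fin t))
      (fun p => |y (Sum.inr p)|) ⟨(⟨0, by omega⟩, ⟨0, by omega⟩), Finset.mem_univ _⟩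
    obtain ⟨A, hAdef⟩ : ∃ A : ℝ, A = |y (Sum.inl i0)| := ⟨_, rfl⟩
    obtain ⟨B, hBdef⟩ : ∃ B : ℝ, B = |y (Sum.inr p0)| := ⟨_, rfl⟩
    have hA0 : 0 ≤ A := hAdef ▸ abs_nonneg _
    have hB0 : 0 ≤ B := hBdef ▸ abs_nonneg _
    obtain ⟨M, hMdef⟩ : ∃ M : ℝ, M = |μ| := ⟨_, rfl⟩
    have hμM : μ ≤ M := hMdef ▸ le_abs_self μ
    have hM0 : 0 ≤ M := hMdef ▸ abs_nonneg _
    have heq1 := congrFun hyeq (Sum.inl i0)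
    rw [hGr, mulVec_inl] at heq1
    simp only [Pi.smul_apply, smul_eq_mul] at heq1
    have hclaim1 : M * A ≤ ((s:ℝ)-2) * A + ((k:ℝ)*(t:ℝ)) * B := by
      have h1 : |∑ j : Fin (s-1), if i0 ≠ j then y (Sum.inl j) else 0| ≤ ((s:ℝ)-1)*A - A := by
        calc |∑ j : Fin (s-1), if i0 ≠ j then y (Sum.inl j) else 0|
            ≤ ∑ j : Fin (s-1), |if i0 ≠ j then y (Sum.inl j) else 0| :=
              Finset.abs_sum_le_sum_abs _ _
          _ ≤ ∑ j : Fin (s-1), (if i0 ≠ j then A else 0) := by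
              apply Finset.sum_le_sum
              intro j _
              by_cases h : i0 ≠ j
              · rw [if_pos h, if_pos h, hAdef]; exact hi0 j (Finset.mem_univ j)
              · rw [if_neg h, if_neg h, abs_zero]
          _ = ((s-1:ℕ):ℝ)*A - A := sum_ite_ne_const i0 A
          _ = ((s:ℝ)-1)*A - A := by rw [hcard]
      have h2 : |∑ p : Fin k × Fin t, y (Sum.inr p)| ≤ ((k:ℝ)*(t:ℝ)) * B := by
        calc |∑ p : Fin k × Fin t, y (Sum.inr p)|
            ≤ ∑ p : Fin k × Fin t, |y (Sum.inr p)| := Finset.abs_sum_le_sum_abs _ _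
          _ ≤ ∑ _p : Fin k × Fin t, B :=
              Finset.sum_le_sum fun p _ => hBdef ▸ hp0 p (Finset.mem_univ p)
          _ = ((k:ℝ)*(t:ℝ)) * B := by
              rw [Finset.sum_const]
              simp [Finset.card_univ, mul_assoc]
      have h3 : M * A = |μ * y (Sum.inl i0)| := by rw [hMdef, hAdef, abs_mul]
      rw [← heq1] at h3
      calc M * A = |(∑ j : Fin (s-1), if i0 ≠ j then y (Sum.inl j) else 0)
            + ∑ p : Fin k × Fin t, y (Sum.inr p)| := h3
        _ ≤ |∑ j : Fin (s-1), if i0 ≠ j then y (Sum.inl j) else 0|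
            + |∑ p : Fin k × Fin t, y (Sum.inr p)| := abs_add_le _ _
        _ ≤ (((s:ℝ)-1)*A - A) + ((k:ℝ)*(t:ℝ)) * B := add_le_add h1 h2
        _ = ((s:ℝ)-2) * A + ((k:ℝ)*(t:ℝ)) * B := by ring
    have heq2 := congrFun hyeq (Sum.inr p0)
    rw [hGr, mulVec_inr] at heq2
    simp only [Pi.smul_apply, smul_eq_mul] at heq2
    have hclaim2 : M * B ≤ ((s:ℝ)-1) * A + ((t:ℝ)-1) * B := by
      have h1 : |∑ j : Fin (s-1), y (Sum.inl j)| ≤ ((s:ℝ)-1) * A := by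
        calc |∑ j : Fin (s-1), y (Sum.inl j)|
            ≤ ∑ j : Fin (s-1), |y (Sum.inl j)| := Finset.abs_sum_le_sum_abs _ _
          _ ≤ ∑ _j : Fin (s-1), A :=
              Finset.sum_le_sum fun j _ => hAdef ▸ hi0 j (Finset.mem_univ j)
          _ = ((s:ℝ)-1) * A := by
              rw [Finset.sum_const]
              simp [Finset.card_univ, hcard]
      have h2 : |∑ p : Fin k × Fin t, if (cliqueUnion k t).Adj p0 p then y (Sum.inr p) else 0|
          ≤ (t:ℝ)*B - B := by
        calc |∑ p : Fin k × Fin t, if (cliqueUnion k t).Adj p0 p then y (Sum.inr p) else 0|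
            ≤ ∑ p : Fin k × Fin t, |if (cliqueUnion k t).Adj p0 p then y (Sum.inr p) else 0| :=
              Finset.abs_sum_le_sum_abs _ _
          _ ≤ ∑ p : Fin k × Fin t, (if (cliqueUnion k t).Adj p0 p then B else 0) := by
              apply Finset.sum_le_sum
              intro p _
              by_cases h : (cliqueUnion k t).Adj p0 p
              · rw [if_pos h, if_pos h, hBdef]; exact hp0 p (Finset.mem_univ p)
              · rw [if_neg h, if_neg h, abs_zero]
          _ = (t:ℝ)*B - B := sum_ite_clique k t p0 B
      have h3 : M * B = |μ * y (Sum.inr p0)| := by rw [hMdef, hBdef, abs_mul]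
      rw [← heq2] at h3
      calc M * B = |(∑ j : Fin (s-1), y (Sum.inl j))
            + ∑ p : Fin k × Fin t, if (cliqueUnion k t).Adj p0 p then y (Sum.inr p) else 0| := h3
        _ ≤ |∑ j : Fin (s-1), y (Sum.inl j)|
            + |∑ p : Fin k × Fin t, if (cliqueUnion k t).Adj p0 p then y (Sum.inr p) else 0| :=
              abs_add_le _ _
        _ ≤ ((s:ℝ)-1) * A + ((t:ℝ)*B - B) := add_le_add h1 h2
        _ = ((s:ℝ)-1) * A + ((t:ℝ)-1) * B := by ring
    have hAB : 0 < A ∨ 0 < B := by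
      by_contra hcon
      push_neg at hcon
      have hA : A = 0 := le_antisymm hcon.1 hA0
      have hB : B = 0 := le_antisymm hcon.2 hB0
      apply hy0
      funext v
      rcases v with i | p
      · have h := hi0 i (Finset.mem_univ i)
        rw [← hAdef, hA] at h
        simpa [abs_nonpos_iff] using h
      · have h := hp0 p (Finset.mem_univ p)
        rw [← hBdef, hB] at h
        simpa [abs_nonpos_iff] using h
    clear hyeq heq1 heq2 hi0 hp0 hy0 hAdef hBdef hMdef y hmem
    rcases le_or_gt M ((t:ℝ)-1) with hMT | hMT
    · linarith
    · rcases eq_or_lt_of_le hA0 with hA | hA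
      · have hB : 0 < B := by
          rcases hAB with h | h
          · rw [← hA] at h; exact absurd h (lt_irrefl 0)
          · exact h
        have : M ≤ (t:ℝ)-1 := by
          rw [← hA] at hclaim2
          exact le_of_mul_le_mul_right (by linarith) hB
        linarith
      · rcases eq_or_lt_of_le hB0 with hB | hB
        · have : M ≤ (s:ℝ)-2 := by
            rw [← hB] at hclaim1
            exact le_of_mul_le_mul_right (by linarith) hA
          linarith
        · have hq1 : (M - ((s:ℝ)-2)) * A ≤ ((k:ℝ)*(t:ℝ)) * B := by linarith
          have hq2 : (M - ((t:ℝ)-1)) * B ≤ ((s:ℝ)-1) * A := by linarith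
          have hqq : ((M - ((t:ℝ)-1)) * B) * ((M - ((s:ℝ)-2)) * A)
              ≤ (((s:ℝ)-1) * A) * (((k:ℝ)*(t:ℝ)) * B) := by
            apply mul_le_mul hq2 hq1
            · apply mul_nonneg _ (le_of_lt hA)
              linarith
            · apply mul_nonneg _ (le_of_lt hA)
              linarith
          have hquad : M^2 - P*M - C ≤ 0 := by
            rw [hPdef, hCdef]
            nlinarith [hqq, mul_pos hA hB]
          have hMR : 2*M - P ≤ R := by
            rcases le_or_gt (2*M - P) 0 with h | h
            · linarith
            · nlinarith [hquad, hRsq, hR0]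
          linarith
  have hEeq : lam1 (Gr.adjMatrix ℝ) = sSup E := rfl
  have hfinal : sSup E = L := le_antisymm (csSup_le ⟨L, hmem⟩ hub) (le_csSup ⟨L, hub⟩ hmem)
  rw [hEeq, hfinal, hLdef, hRdef, hPdef, hCdef]
  have hNn : ((s:ℝ)-1)*((k:ℝ)*(t:ℝ)) = ((s:ℝ)-1)*((n:ℝ) - (s:ℝ) + 1) := by
    have hncast : (n:ℝ) = ((s:ℝ)-1) + (k:ℝ)*(t:ℝ) := by
      rw [hn]; push_cast [Nat.cast_sub hs1]; ring
    rw [hncast]; ring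
  rw [hNn]
end

section
/- Let G be a finite simple graph and suppose there exist disjoint vertex sets K and T with |T| >= 3 such that every vertex of K is adjacent to every vertex of T, and two distinct vertices u, v in T are adjacent. If |T| >= binomial(|K|,2) + 2, then G contains a subdivision of the complete graph K_{|K|+2} (equivalently, a topological minor, hence a minor, of K_{|K|+2}). -/
open SimpleGraph Finset

attribute [local instance] Classical.propDecidable

/-- `H` is a minor of `G`: there are nonempty, pairwise disjoint, connected branch sets
in `G`, one for each vertex of `H`, with an edge of `G` between the branch sets of any
two adjacent vertices of `H`. -/
def SimpleGraph.IsMinor {α β : Type*} (H : SimpleGraph α) (G : SimpleGraph β) : Prop :=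
  ∃ B : α → Set β, (∀ a, (B a).Nonempty) ∧ (∀ a, (G.induce (B a)).Connected) ∧
    (Pairwise fun a b => Disjoint (B a) (B b)) ∧
    (∀ a b, H.Adj a b → ∃ x ∈ B a, ∃ y ∈ B b, G.Adj x y)

lemma exists_injOn_of_card_le' {α β : Type*} [DecidableEq β] [Nonempty β]
    (s : Finset α) (t : Finset β) (hst : s.card ≤ t.card) :
    ∃ f : α → β, Set.InjOn f ↑s ∧ ∀ a ∈ s, f a ∈ t := by
  classical
  obtain ⟨t', ht't, ht'card⟩ := Finset.exists_subset_card_eq hst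
  have hcards : Fintype.card s = Fintype.card t' := by
    simp [ht'card]
  let g : s ≃ t' := Fintype.equivOfCardEq hcards
  refine ⟨fun a => if h : a ∈ s then (g ⟨a, h⟩ : β) else Classical.arbitrary β, ?_, ?_⟩
  · intro a ha b hb hab
    simp only [Finset.mem_coe] at ha hb
    dsimp only at hab
    rw [dif_pos ha, dif_pos hb] at hab
    have := g.injective (Subtype.ext hab)
    exact Subtype.ext_iff.mp this
  · intro a ha
    dsimp only
    rw [dif_pos ha]
    exact ht't (g ⟨a, ha⟩).2

lemma connected_of_hub {V : Type*} (G : SimpleGraph V) (A : Set V) (a : V) (ha : a ∈ A)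
    (h : ∀ b ∈ A, b ≠ a → G.Adj a b) : (G.induce A).Connected := by
  rw [SimpleGraph.connected_iff]
  refine ⟨?_, ⟨⟨a, ha⟩⟩⟩
  have key : ∀ r : A, (G.induce A).Reachable ⟨a, ha⟩ r := by
    rintro ⟨r, hr⟩
    rcases eq_or_ne r a with rfl | hne
    · exact SimpleGraph.Reachable.refl _
    · exact SimpleGraph.Adj.reachable (h r hr hne)
  exact fun p q => (key p).symm.trans (key q)

theorem stmt13 {V : Type*} [Fintype V] (G : SimpleGraph V) (K T : Finset V)
    (hdisj : Disjoint K T) (hT3 : 3 ≤ T.card)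
    (hjoin : ∀ k ∈ K, ∀ t ∈ T, G.Adj k t)
    (u v : V) (hu : u ∈ T) (hv : v ∈ T) (huv : u ≠ v) (hadj : G.Adj u v)
    (hTbig : K.card.choose 2 + 2 ≤ T.card) :
    (completeGraph (Fin (K.card + 2))).IsMinor G := by
  classical
  have hV : Nonempty V := ⟨u⟩
  set n := K.card with hn
  let e : Fin n ≃ K := K.equivFin.symm
  let x : Fin n → V := fun i => (e i : V)
  have hxK : ∀ i, x i ∈ K := fun i => (e i).2
  have hxinj : Function.Injective x := fun i j h => e.injective (Subtype.ext h)
  have hxT : ∀ i, x i ∉ T := fun i hi => Finset.disjoint_left.mp hdisj (hxK i) hi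
  let T' : Finset V := (T.erase u).erase v
  have hT'sub : T' ⊆ T := fun a ha => Finset.mem_of_mem_erase (Finset.mem_of_mem_erase ha)
  have hvmem : v ∈ T.erase u := Finset.mem_erase.mpr ⟨Ne.symm huv, hv⟩
  have hT'card : T'.card = T.card - 2 := by
    rw [Finset.card_erase_of_mem hvmem, Finset.card_erase_of_mem hu]
    omega
  have hT'u : ∀ a ∈ T', a ≠ u := fun a ha =>
    (Finset.mem_erase.mp (Finset.mem_of_mem_erase ha)).1
  have hT'v : ∀ a ∈ T', a ≠ v := fun a ha => (Finset.mem_erase.mp ha).1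
  let S : Finset (Finset (Fin n)) := Finset.univ.powersetCard 2
  have hScard : S.card = n.choose 2 := by
    simp [S, Finset.card_powersetCard]
  have hle : S.card ≤ T'.card := by rw [hScard, hT'card]; omega
  obtain ⟨f, hfinj, hfmem⟩ := exists_injOn_of_card_le' S T' hle
  -- branch sets
  let B : Fin (n + 2) → Set V := fun i =>
    if h : (i : ℕ) < n then
      insert (x ⟨i, h⟩) (f '' {s | s ∈ S ∧ s.min = ((⟨i, h⟩ : Fin n) : WithBot (Fin n))})
    else if (i : ℕ) = n then {u} else {v}
  have hBlt : ∀ (i : Fin (n + 2)) (h : (i : ℕ) < n),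
      B i = insert (x ⟨i, h⟩)
        (f '' {s | s ∈ S ∧ s.min = ((⟨i, h⟩ : Fin n) : WithBot (Fin n))}) :=
    fun i h => by simp only [B, dif_pos h]
  have hBu : ∀ (i : Fin (n + 2)), (i : ℕ) = n → B i = {u} := by
    intro i h
    simp only [B]
    rw [dif_neg (by omega), if_pos h]
  have hBv : ∀ (i : Fin (n + 2)), (i : ℕ) = n + 1 → B i = {v} := by
    intro i h
    simp only [B]
    rw [dif_neg (by omega), if_neg (by omega)]
  refine ⟨B, ?_, ?_, ?_, ?_⟩
  · -- nonempty
    intro i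
    rcases lt_or_ge (i : ℕ) n with h | h
    · rw [hBlt i h]; exact ⟨x ⟨i, h⟩, Set.mem_insert _ _⟩
    · rcases (by omega : (i : ℕ) = n ∨ (i : ℕ) = n + 1) with h' | h'
      · rw [hBu i h']; exact ⟨u, rfl⟩
      · rw [hBv i h']; exact ⟨v, rfl⟩
  · -- connected
    intro i
    rcases lt_or_ge (i : ℕ) n with h | h
    · rw [hBlt i h]
      refine connected_of_hub G _ (x ⟨i, h⟩) (Set.mem_insert _ _) ?_
      rintro b hb hbne
      rcases hb with hb | ⟨s, hs, rfl⟩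
      · exact absurd hb hbne
      · exact hjoin _ (hxK _) _ (hT'sub (hfmem s hs.1))
    · rcases (by omega : (i : ℕ) = n ∨ (i : ℕ) = n + 1) with h' | h'
      · rw [hBu i h']
        refine connected_of_hub G _ u rfl ?_
        rintro b rfl hbne; exact absurd rfl hbne
      · rw [hBv i h']
        refine connected_of_hub G _ v rfl ?_
        rintro b rfl hbne; exact absurd rfl hbne
  · -- pairwise disjoint
    intro i j hij
    rw [Set.disjoint_left]
    intro w hwi hwj
    rcases lt_or_ge (i : ℕ) n with h1 | h1 <;> rcases lt_or_ge (j : ℕ) n with h2 | h2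
    · rw [hBlt i h1] at hwi
      rw [hBlt j h2] at hwj
      have hne : (⟨(i : ℕ), h1⟩ : Fin n) ≠ ⟨(j : ℕ), h2⟩ := by
        intro hc
        have hc' : (i : ℕ) = (j : ℕ) := Fin.mk.inj hc
        exact hij (Fin.ext hc')
      rcases hwi with hwi | ⟨s, hs, rfl⟩
      · rcases hwj with hwj | ⟨s, hs, hws⟩
        · exact hne (hxinj (hwi.symm.trans hwj))
        · have hT : f s ∈ T := hT'sub (hfmem s hs.1)
          rw [hws, hwi] at hT
          exact hxT _ hT
      · rcases hwj with hwj | ⟨s', hs', hws⟩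
        · have hT : f s ∈ T := hT'sub (hfmem s hs.1)
          rw [hwj] at hT
          exact hxT _ hT
        · have : s = s' := hfinj hs.1 hs'.1 hws.symm
          subst this
          have := hs.2.symm.trans hs'.2
          exact hne (WithBot.coe_injective this)
    · rcases (by omega : (j : ℕ) = n ∨ (j : ℕ) = n + 1) with h' | h'
      · rw [hBu j h'] at hwj
        rw [hBlt i h1] at hwi
        rcases hwi with hwi | ⟨s, hs, rfl⟩
        · have hu' : (u:V) ∈ T := hu
          rw [← hwj, hwi] at hu'
          exact hxT _ hu'
        · exact hT'u _ (hfmem s hs.1) hwj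
      · rw [hBv j h'] at hwj
        rw [hBlt i h1] at hwi
        rcases hwi with hwi | ⟨s, hs, rfl⟩
        · have hv' : (v:V) ∈ T := hv
          rw [← hwj, hwi] at hv'
          exact hxT _ hv'
        · exact hT'v _ (hfmem s hs.1) hwj
    · rcases (by omega : (i : ℕ) = n ∨ (i : ℕ) = n + 1) with h' | h'
      · rw [hBu i h'] at hwi
        rw [hBlt j h2] at hwj
        rcases hwj with hwj | ⟨s, hs, rfl⟩
        · have hu' : (u:V) ∈ T := hu
          rw [← hwi, hwj] at hu'
          exact hxT _ hu'
        · exact hT'u _ (hfmem s hs.1) hwi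
      · rw [hBv i h'] at hwi
        rw [hBlt j h2] at hwj
        rcases hwj with hwj | ⟨s, hs, rfl⟩
        · have hv' : (v:V) ∈ T := hv
          rw [← hwi, hwj] at hv'
          exact hxT _ hv'
        · exact hT'v _ (hfmem s hs.1) hwi
    · rcases (by omega : (i : ℕ) = n ∨ (i : ℕ) = n + 1) with h1' | h1' <;>
        rcases (by omega : (j : ℕ) = n ∨ (j : ℕ) = n + 1) with h2' | h2'
      · exact hij (Fin.ext (h1'.trans h2'.symm))
      · rw [hBu i h1'] at hwi
        rw [hBv j h2'] at hwj
        exact huv (hwi.symm.trans hwj)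
      · rw [hBv i h1'] at hwi
        rw [hBu j h2'] at hwj
        exact huv (hwj.symm.trans hwi)
      · exact hij (Fin.ext (h1'.trans h2'.symm))
  · -- edges
    intro a b hab
    have hne : a ≠ b := hab.ne
    rcases lt_or_ge (a : ℕ) n with h1 | h1 <;> rcases lt_or_ge (b : ℕ) n with h2 | h2
    · -- both in K part
      set i' : Fin n := ⟨(a : ℕ), h1⟩
      set j' : Fin n := ⟨(b : ℕ), h2⟩
      have hij' : i' ≠ j' := by
        intro hc
        have hc' : (a : ℕ) = (b : ℕ) := Fin.mk.inj hc
        exact hne (Fin.ext hc')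
      set s : Finset (Fin n) := {i', j'} with hsdef
      have hsS : s ∈ S := by
        rw [Finset.mem_powersetCard]
        exact ⟨Finset.subset_univ _, Finset.card_pair hij'⟩
      have hsne : s.Nonempty := ⟨i', Finset.mem_insert_self _ _⟩
      have hmin : s.min = (s.min' hsne : WithBot (Fin n)) := (Finset.coe_min' hsne).symm
      have hminmem : s.min' hsne ∈ s := Finset.min'_mem s hsne
      have hfT : f s ∈ T := hT'sub (hfmem s hsS)
      rcases Finset.mem_insert.mp hminmem with hm | hm
      · -- min is i' : f s ∈ B a, x j' ∈ B b
        refine ⟨f s, ?_, x j', ?_, ?_⟩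
        · rw [hBlt a h1]
          exact Set.mem_insert_iff.mpr (Or.inr ⟨s, ⟨hsS, by rw [hmin, hm]⟩, rfl⟩)
        · rw [hBlt b h2]; exact Set.mem_insert _ _
        · exact (hjoin _ (hxK j') _ hfT).symm
      · have hm' : s.min' hsne = j' := Finset.mem_singleton.mp hm
        refine ⟨x i', ?_, f s, ?_, ?_⟩
        · rw [hBlt a h1]; exact Set.mem_insert _ _
        · rw [hBlt b h2]
          exact Set.mem_insert_iff.mpr (Or.inr ⟨s, ⟨hsS, by rw [hmin, hm']⟩, rfl⟩)
        · exact hjoin _ (hxK i') _ hfT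
    · rcases (by omega : (b : ℕ) = n ∨ (b : ℕ) = n + 1) with h' | h'
      · refine ⟨x ⟨(a : ℕ), h1⟩, ?_, u, ?_, hjoin _ (hxK _) _ hu⟩
        · rw [hBlt a h1]; exact Set.mem_insert _ _
        · rw [hBu b h']; rfl
      · refine ⟨x ⟨(a : ℕ), h1⟩, ?_, v, ?_, hjoin _ (hxK _) _ hv⟩
        · rw [hBlt a h1]; exact Set.mem_insert _ _
        · rw [hBv b h']; rfl
    · rcases (by omega : (a : ℕ) = n ∨ (a : ℕ) = n + 1) with h' | h'
      · refine ⟨u, ?_, x ⟨(b : ℕ), h2⟩, ?_, (hjoin _ (hxK _) _ hu).symm⟩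
        · rw [hBu a h']; rfl
        · rw [hBlt b h2]; exact Set.mem_insert _ _
      · refine ⟨v, ?_, x ⟨(b : ℕ), h2⟩, ?_, (hjoin _ (hxK _) _ hv).symm⟩
        · rw [hBv a h']; rfl
        · rw [hBlt b h2]; exact Set.mem_insert _ _
    · rcases (by omega : (a : ℕ) = n ∨ (a : ℕ) = n + 1) with h1' | h1' <;>
        rcases (by omega : (b : ℕ) = n ∨ (b : ℕ) = n + 1) with h2' | h2'
      · exact absurd (Fin.ext (h1'.trans h2'.symm)) hne
      · refine ⟨u, ?_, v, ?_, hadj⟩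
        · rw [hBu a h1']; rfl
        · rw [hBv b h2']; rfl
      · refine ⟨v, ?_, u, ?_, hadj.symm⟩
        · rw [hBv a h1']; rfl
        · rw [hBu b h2']; rfl
      · exact absurd (Fin.ext (h1'.trans h2'.symm)) hne
end
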